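/- Let q > 0, k > 0, D > 0 and R₀ > 0. The asymptotic channel response at a circular receiver of radius R₀, due to continuous emission at rate q from a point transmitter located at the center of this receiver since time 0, is ∫₀^∞ ∫_{{y ∈ ℝ² : |y| ≤ R₀}} q·C(y, τ) dy dτ = (q/k)·(1 − √(k/D)·R₀·K₁(√(k/D)·R₀)), where C(y, τ) = (1/(4πDτ))·exp(−|y|²/(4Dτ) − kτ) and K₁(z) = ∫₀^∞ exp(−z·cosh t)·cosh t dt. -/

import Mathlib

open Real MeasureTheory

/-- The 2D reaction–diffusion heat kernel
`C(r, τ) = (1/(4πDτ))·exp(−|r|²/(4Dτ) − kτ)` for `r ∈ ℝ²`. -/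
noncomputable def heatKernel2D (D k : ℝ) (r : EuclideanSpace ℝ (Fin 2)) (τ : ℝ) : ℝ :=
  (1 / (4 * π * D * τ)) * Real.exp (-‖r‖ ^ 2 / (4 * D * τ) - k * τ)

/-- The modified Bessel function of the second kind of order 1,
`K₁(z) = ∫₀^∞ exp(−z·cosh t)·cosh t dt`. -/
noncomputable def besselK1 (z : ℝ) : ℝ :=
  ∫ t in Set.Ioi (0 : ℝ), Real.exp (-z * Real.cosh t) * Real.cosh t

open Set

lemma aux_sq_eq {x y : ℝ} (hx : 0 ≤ x) (hy : 0 ≤ y) (h : x^2 = y^2) : x = y := by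
  nlinarith [sq_nonneg (x - y)]

lemma integral_disk_gaussian {a R : ℝ} (ha : 0 < a) (hR : 0 < R) :
    ∫ y in Metric.closedBall (0 : EuclideanSpace ℝ (Fin 2)) R,
      Real.exp (-‖y‖ ^ 2 / a) = π * a * (1 - Real.exp (-R ^ 2 / a)) := by
  set f : ℝ → ℝ := fun r => if r ≤ R then Real.exp (-r ^ 2 / a) else 0 with hf
  have h1 : ∫ y in Metric.closedBall (0 : EuclideanSpace ℝ (Fin 2)) R,
      Real.exp (-‖y‖ ^ 2 / a) = ∫ y : EuclideanSpace ℝ (Fin 2), f ‖y‖ := by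
    rw [← integral_indicator measurableSet_closedBall]
    congr 1; ext y
    by_cases h : ‖y‖ ≤ R <;>
      simp [hf, Set.indicator, mem_closedBall_zero_iff, h]
  have hdim : Module.finrank ℝ (EuclideanSpace ℝ (Fin 2)) = 2 := by
    simp [finrank_euclideanSpace]
  have hvol : (volume (Metric.ball (0 : EuclideanSpace ℝ (Fin 2)) 1)).toReal = π := by
    rw [EuclideanSpace.volume_ball]
    simp [Real.sq_sqrt Real.pi_nonneg, Real.Gamma_two]
    rw [show (1:ℝ)+1 = 2 by norm_num, Real.Gamma_two]
    simp [ENNReal.toReal_ofReal Real.pi_nonneg]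
  have h2 : ∫ r in Ioi (0:ℝ), r ^ (Module.finrank ℝ (EuclideanSpace ℝ (Fin 2)) - 1) • f r
      = ∫ r in Ioc (0:ℝ) R, r * Real.exp (-r ^ 2 / a) := by
    rw [hdim]
    rw [setIntegral_eq_of_subset_of_forall_diff_eq_zero measurableSet_Ioi
      Ioc_subset_Ioi_self (fun x hx => ?_)]
    · refine setIntegral_congr_fun measurableSet_Ioc (fun x hx => ?_)
      simp [hf, hx.2, smul_eq_mul]
    · have : ¬ x ≤ R := by
        simp only [mem_diff, mem_Ioi, mem_Ioc, not_and] at hx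
        exact fun h => (hx.2 (hx.1)) h |>.elim
      simp [hf, this]
  have h3 : ∫ r in Ioc (0:ℝ) R, r * Real.exp (-r ^ 2 / a)
      = (a / 2) * (1 - Real.exp (-R ^ 2 / a)) := by
    rw [← intervalIntegral.integral_of_le hR.le]
    have : ∀ x ∈ Set.uIcc (0:ℝ) R, HasDerivAt (fun x => -(a/2) * Real.exp (-x ^ 2 / a))
        (x * Real.exp (-x ^ 2 / a)) x := by
      intro x _
      have h := (((hasDerivAt_pow 2 x).neg.div_const a).exp).const_mul (-(a/2))
      refine h.congr_deriv ?_
      simp only [Pi.neg_apply, Nat.cast_ofNat, pow_one, Nat.add_one_sub_one]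
      field_simp
    rw [intervalIntegral.integral_eq_sub_of_hasDerivAt this
      (Continuous.intervalIntegrable (by continuity) _ _)]
    simp
    ring
  rw [h1, MeasureTheory.integral_fun_norm_addHaar volume f, h2, h3, hdim, measureReal_def, hvol]
  simp only [nsmul_eq_mul, smul_eq_mul, Nat.cast_ofNat]
  ring

lemma integral_exp_neg_add_div {k b : ℝ} (hk : 0 < k) (hb : 0 < b) :
    ∫ τ in Set.Ioi (0:ℝ), Real.exp (-(k * τ + b / τ)) =
      2 * Real.sqrt (b / k) * besselK1 (2 * Real.sqrt (b * k)) := by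
  set c : ℝ := Real.sqrt (b / k) with hcdef
  set z : ℝ := 2 * Real.sqrt (b * k) with hzdef
  have hc : 0 < c := Real.sqrt_pos.mpr (div_pos hb hk)
  have hz : 0 < z := by positivity
  have hkc : k * c = Real.sqrt (b * k) := by
    refine aux_sq_eq (by positivity) (Real.sqrt_nonneg _) ?_
    rw [mul_pow, hcdef, Real.sq_sqrt (div_pos hb hk).le, Real.sq_sqrt (by positivity)]
    field_simp
  have hbc : b / c = Real.sqrt (b * k) := by
    refine aux_sq_eq (by positivity) (Real.sqrt_nonneg _) ?_
    rw [div_pow, hcdef, Real.sq_sqrt (div_pos hb hk).le, Real.sq_sqrt (by positivity)]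
    field_simp
  have key : ∀ u : ℝ, k * (c * Real.exp u) + b / (c * Real.exp u) = z * Real.cosh u := by
    intro u
    have h1 : b / (c * Real.exp u) = (b / c) * Real.exp (-u) := by
      rw [Real.exp_neg]; field_simp
    rw [h1, Real.cosh_eq, hbc, hzdef, show k * (c * Real.exp u) = (k * c) * Real.exp u by ring,
      hkc]
    ring
  set g : ℝ → ℝ := fun u => c * Real.exp u * Real.exp (-(z * Real.cosh u)) with hg
  have himg : (fun u : ℝ => c * Real.exp u) '' Set.univ = Set.Ioi (0:ℝ) := by
    rw [Set.image_univ]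
    ext x
    simp only [Set.mem_range, Set.mem_Ioi]
    constructor
    · rintro ⟨u, rfl⟩; positivity
    · intro hx
      exact ⟨Real.log (x / c), by rw [Real.exp_log (by positivity)]; field_simp⟩
  have hcov : ∫ τ in Set.Ioi (0:ℝ), Real.exp (-(k * τ + b / τ)) = ∫ u : ℝ, g u := by
    rw [← himg, integral_image_eq_integral_abs_deriv_smul MeasurableSet.univ
      (fun x _ => ((Real.hasDerivAt_exp x).const_mul c).hasDerivWithinAt)
      (((mul_right_injective₀ hc.ne').comp Real.exp_injective).injOn)
      (fun τ => Real.exp (-(k * τ + b / τ)))]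
    rw [Measure.restrict_univ]
    congr 1; funext u
    rw [key u, smul_eq_mul, abs_of_pos (by positivity)]
  have hmeas : Continuous g := by fun_prop
  have hbound2 : ∀ u : ℝ, 0 < u → g u ≤ (16 * c / z ^ 2) * Real.exp (-u) := by
    intro u hu
    have hcosh : z * Real.exp u / 2 ≤ z * Real.cosh u := by
      rw [Real.cosh_eq]
      have := Real.exp_pos (-u)
      nlinarith
    have hquad : (z * Real.exp u / 2) ^ 2 / 4 ≤ Real.exp (z * Real.exp u / 2) := by
      set x := z * Real.exp u / 2 with hx
      have hx0 : 0 ≤ x := by positivity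
      have h1 : 1 + x / 2 ≤ Real.exp (x / 2) := by linarith [Real.add_one_le_exp (x / 2)]
      have h2 : (1 + x / 2) ^ 2 ≤ Real.exp (x / 2) ^ 2 := by nlinarith [Real.exp_pos (x/2)]
      rw [← Real.exp_nat_mul] at h2
      have hxx : ((2:ℕ):ℝ) * (x / 2) = x := by push_cast; ring
      rw [hxx] at h2
      nlinarith
    have h3 : Real.exp (-(z * Real.cosh u)) ≤ 16 / (z ^ 2 * Real.exp u ^ 2) := by
      rw [Real.exp_neg]
      have hA : z ^ 2 * Real.exp u ^ 2 / 16 ≤ Real.exp (z * Real.cosh u) := by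
        calc z ^ 2 * Real.exp u ^ 2 / 16 = (z * Real.exp u / 2) ^ 2 / 4 := by ring
        _ ≤ Real.exp (z * Real.exp u / 2) := hquad
        _ ≤ Real.exp (z * Real.cosh u) := Real.exp_le_exp.mpr hcosh
      have := inv_anti₀ (show (0:ℝ) < z ^ 2 * Real.exp u ^ 2 / 16 by positivity) hA
      simpa [inv_div] using this
    calc g u = c * Real.exp u * Real.exp (-(z * Real.cosh u)) := rfl
    _ ≤ c * Real.exp u * (16 / (z ^ 2 * Real.exp u ^ 2)) := by
        apply mul_le_mul_of_nonneg_left h3 (by positivity)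
    _ = (16 * c / z ^ 2) * Real.exp (-u) := by
        rw [Real.exp_neg]
        field_simp
  have hgpos : ∀ u : ℝ, 0 ≤ g u := fun u => by positivity
  have hexpneg : IntegrableOn (fun u : ℝ => Real.exp (-u)) (Ioi (0:ℝ)) := by
    simpa using exp_neg_integrableOn_Ioi 0 one_pos
  have hg2 : IntegrableOn g (Ioi (0:ℝ)) := by
    refine Integrable.mono (hexpneg.const_mul (16 * c / z ^ 2))
      hmeas.aestronglyMeasurable.restrict ?_
    filter_upwards [ae_restrict_mem measurableSet_Ioi] with u hu
    rw [Real.norm_eq_abs, Real.norm_eq_abs, abs_of_nonneg (hgpos u), abs_of_nonneg (by positivity)]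
    exact hbound2 u hu
  have hg1 : IntegrableOn g (Iic (0:ℝ)) := by
    refine Integrable.mono ((integrableOn_exp_Iic 0).const_mul c)
      hmeas.aestronglyMeasurable.restrict ?_
    refine ae_of_all _ (fun u => ?_)
    rw [Real.norm_eq_abs, Real.norm_eq_abs, abs_of_nonneg (hgpos u),
      abs_of_nonneg (by positivity)]
    have : Real.exp (-(z * Real.cosh u)) ≤ 1 := by
      rw [Real.exp_le_one_iff]
      have := Real.one_le_cosh u
      nlinarith
    calc g u = c * Real.exp u * Real.exp (-(z * Real.cosh u)) := rfl
    _ ≤ c * Real.exp u * 1 := by apply mul_le_mul_of_nonneg_left this (by positivity)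
    _ = c * Real.exp u := by ring
  have hgneg : IntegrableOn (fun u => g (-u)) (Ioi (0:ℝ)) := by
    refine Integrable.mono (hexpneg.const_mul c)
      (hmeas.comp continuous_neg).aestronglyMeasurable.restrict ?_
    refine ae_of_all _ (fun u => ?_)
    rw [Real.norm_eq_abs, Real.norm_eq_abs, abs_of_nonneg (hgpos (-u)),
      abs_of_nonneg (by positivity)]
    have : Real.exp (-(z * Real.cosh (-u))) ≤ 1 := by
      rw [Real.exp_le_one_iff]
      have := Real.one_le_cosh (-u)
      nlinarith
    calc g (-u) = c * Real.exp (-u) * Real.exp (-(z * Real.cosh (-u))) := rfl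
    _ ≤ c * Real.exp (-u) * 1 := by apply mul_le_mul_of_nonneg_left this (by positivity)
    _ = c * Real.exp (-u) := by ring
  rw [hcov, ← intervalIntegral.integral_Iic_add_Ioi hg1 hg2]
  have hneg : ∫ u in Iic (0:ℝ), g u = ∫ u in Ioi (0:ℝ), g (-u) := by
    rw [integral_comp_neg_Ioi]
    norm_num
  rw [hneg, ← integral_add hgneg hg2]
  rw [besselK1, ← integral_const_mul]
  refine setIntegral_congr_fun measurableSet_Ioi (fun u _ => ?_)
  have : g (-u) + g u = c * (Real.exp (-u) + Real.exp u) * Real.exp (-(z * Real.cosh u)) := by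
    simp only [hg, Real.cosh_neg]
    ring
  rw [this, neg_mul, Real.cosh_eq]
  ring

/-- For `q > 0`, `k > 0`, `D > 0` and `R₀ > 0`, the asymptotic channel response at a circular
receiver of radius `R₀` due to continuous emission at rate `q` from its own center is
`∫₀^∞ ∫_{|y| ≤ R₀} q·C(y, τ) dy dτ = (q/k)·(1 − √(k/D)·R₀·K₁(√(k/D)·R₀))`. -/
theorem self_asymptotic_channel_response (q k D R₀ : ℝ)
    (hq : 0 < q) (hk : 0 < k) (hD : 0 < D) (hR₀ : 0 < R₀) :
    ∫ τ in Set.Ioi (0 : ℝ),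
        ∫ y in {y : EuclideanSpace ℝ (Fin 2) | ‖y‖ ≤ R₀}, q * heatKernel2D D k y τ =
      (q / k) * (1 - Real.sqrt (k / D) * R₀ * besselK1 (Real.sqrt (k / D) * R₀)) := by
  have hset : {y : EuclideanSpace ℝ (Fin 2) | ‖y‖ ≤ R₀} = Metric.closedBall 0 R₀ := by
    ext y; simp [Metric.mem_closedBall, dist_zero_right]
  set b : ℝ := R₀ ^ 2 / (4 * D) with hbdef
  have hb : 0 < b := by positivity
  have step1 : ∀ τ ∈ Ioi (0:ℝ),
      (∫ y in {y : EuclideanSpace ℝ (Fin 2) | ‖y‖ ≤ R₀}, q * heatKernel2D D k y τ)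
        = q * Real.exp (-(k * τ)) - q * Real.exp (-(k * τ + b / τ)) := by
    intro τ hτ
    rw [mem_Ioi] at hτ
    have ha : 0 < 4 * D * τ := by positivity
    have hfun : ∀ y : EuclideanSpace ℝ (Fin 2), q * heatKernel2D D k y τ
        = (q * (1 / (4 * π * D * τ)) * Real.exp (-(k * τ))) * Real.exp (-‖y‖ ^ 2 / (4 * D * τ)) := by
      intro y
      rw [heatKernel2D, sub_eq_add_neg, Real.exp_add]
      ring
    rw [hset]
    simp only [hfun]
    rw [integral_const_mul, integral_disk_gaussian ha hR₀]
    have hexp : Real.exp (-(k * τ)) * Real.exp (-R₀ ^ 2 / (4 * D * τ))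
        = Real.exp (-(k * τ + b / τ)) := by
      rw [← Real.exp_add]
      congr 1
      rw [hbdef]
      field_simp
      ring
    have hπ : π ≠ 0 := Real.pi_ne_zero
    rw [← hexp]
    field_simp
  rw [setIntegral_congr_fun measurableSet_Ioi step1]
  have hA : IntegrableOn (fun τ : ℝ => Real.exp (-(k * τ))) (Ioi (0:ℝ)) := by
    simpa [neg_mul] using exp_neg_integrableOn_Ioi 0 hk
  have hB : IntegrableOn (fun τ : ℝ => Real.exp (-(k * τ + b / τ))) (Ioi (0:ℝ)) := by
    refine Integrable.mono hA ?_ ?_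
    · exact (Real.measurable_exp.comp ((measurable_const.mul measurable_id).add
        (measurable_const.div measurable_id)).neg).aestronglyMeasurable.restrict
    · filter_upwards [ae_restrict_mem measurableSet_Ioi] with τ hτ
      rw [mem_Ioi] at hτ
      rw [Real.norm_eq_abs, Real.norm_eq_abs, abs_of_pos (Real.exp_pos _),
        abs_of_pos (Real.exp_pos _)]
      apply Real.exp_le_exp.mpr
      have : 0 ≤ b / τ := by positivity
      linarith
  rw [integral_sub (hA.const_mul q) (hB.const_mul q), integral_const_mul, integral_const_mul,
    integral_exp_neg_add_div hk hb]
  have hexpint : ∫ τ in Ioi (0:ℝ), Real.exp (-(k * τ)) = 1 / k := by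
    have := integral_comp_mul_left_Ioi (fun x : ℝ => Real.exp (-x)) 0 hk
    simp only [mul_zero] at this
    rw [this, integral_exp_neg_Ioi_zero]
    simp [one_div]
  rw [hexpint]
  have h1 : 2 * Real.sqrt (b * k) = Real.sqrt (k / D) * R₀ := by
    refine aux_sq_eq (by positivity) (by positivity) ?_
    rw [mul_pow, mul_pow, Real.sq_sqrt (by positivity : (0:ℝ) ≤ b * k),
      Real.sq_sqrt (by positivity : (0:ℝ) ≤ k / D), hbdef]
    field_simp
    ring
  have h2 : 2 * Real.sqrt (b / k) = Real.sqrt (k / D) * R₀ / k := by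
    refine aux_sq_eq (by positivity) (by positivity) ?_
    rw [mul_pow, div_pow, mul_pow, Real.sq_sqrt (by positivity : (0:ℝ) ≤ b / k),
      Real.sq_sqrt (by positivity : (0:ℝ) ≤ k / D), hbdef]
    field_simp
    ring
  rw [h1, ← mul_assoc, h2]
  field_simp
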